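/- Let μ ∈ (0,1) and λ* ∈ (0,1), let (A,B) be controllable, let X ⊆ ℝⁿ and U ⊆ ℝᵐ be C-sets, let C be a λ*-contractive C-set, and set ε := (1−μ)/(2μ). Then there exist λ ∈ [λ*, 1) and k ∈ ℕ such that Q_k^λ(X) ⊆ (1+ε)·Q_k^λ(C) ⊆ (1+ε)·C_max^λ and 1 + μ ≤ 2λ^k. -/

import Mathlib

open Set Metric Pointwise

noncomputable section

abbrev Euc (n : ℕ) := EuclideanSpace ℝ (Fin n)

def IsCSet {n : ℕ} (C : Set (Euc n)) : Prop :=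
  Convex ℝ C ∧ IsCompact C ∧ (0 : Euc n) ∈ interior C

def rho {n : ℕ} (ξ : Euc n) (C : Set (Euc n)) : ℝ :=
  sSup {μ : ℝ | 0 < μ ∧ μ • ξ ∈ C}

def cdist {n : ℕ} (C D : Set (Euc n)) : ℝ :=
  ⨆ ξ : sphere (0 : Euc n) 1, |Real.log (rho ξ C) - Real.log (rho ξ D)|

def Q1 {n m : ℕ} (A : Matrix (Fin n) (Fin n) ℝ) (B : Matrix (Fin n) (Fin m) ℝ)
    (X : Set (Euc n)) (U : Set (Euc m)) (lam : ℝ) (D : Set (Euc n)) : Set (Euc n) :=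
  {x ∈ X | ∃ u ∈ U, WithLp.toLp 2 (A.mulVec x + B.mulVec u) ∈ lam • D}

def Qiter {n m : ℕ} (A : Matrix (Fin n) (Fin n) ℝ) (B : Matrix (Fin n) (Fin m) ℝ)
    (X : Set (Euc n)) (U : Set (Euc m)) (lam : ℝ) (D : Set (Euc n)) : ℕ → Set (Euc n)
  | 0 => D
  | k + 1 => Q1 A B X U lam (Qiter A B X U lam D k)

def IsContractive {n m : ℕ} (A : Matrix (Fin n) (Fin n) ℝ) (B : Matrix (Fin n) (Fin m) ℝ)
    (X : Set (Euc n)) (U : Set (Euc m)) (lam : ℝ) (C : Set (Euc n)) : Prop :=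
  C ⊆ X ∧ ∀ x ∈ C, ∃ u ∈ U, WithLp.toLp 2 (A.mulVec x + B.mulVec u) ∈ lam • C

def Cmax {n m : ℕ} (A : Matrix (Fin n) (Fin n) ℝ) (B : Matrix (Fin n) (Fin m) ℝ)
    (X : Set (Euc n)) (U : Set (Euc m)) (lam : ℝ) : Set (Euc n) :=
  ⋃₀ {C | IsContractive A B X U lam C}

def ctrb {n m : ℕ} (A : Matrix (Fin n) (Fin n) ℝ) (B : Matrix (Fin n) (Fin m) ℝ) :
    Matrix (Fin n) (Fin n × Fin m) ℝ :=
  Matrix.of fun i p => (A ^ (n - 1 - (p.1 : ℕ)) * B) i p.2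

def Controllable {n m : ℕ} (A : Matrix (Fin n) (Fin n) ℝ)
    (B : Matrix (Fin n) (Fin m) ℝ) : Prop :=
  (ctrb A B).rank = n

def enorm {ι : Type*} [Fintype ι] (v : ι → ℝ) : ℝ :=
  ‖(WithLp.equiv 2 (ι → ℝ)).symm v‖

def sigmaMax {n : ℕ} {ι : Type*} [Fintype ι] (Φ : Matrix (Fin n) ι ℝ) : ℝ :=
  ⨆ ξ : sphere (0 : EuclideanSpace ℝ ι) 1, enorm (Φ.mulVec ξ)

def sigmaMin {n : ℕ} {ι : Type*} [Fintype ι] (Φ : Matrix (Fin n) ι ℝ) : ℝ :=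
  ⨅ ξ : sphere (0 : Euc n) 1, enorm (Φ.transpose.mulVec ξ)

def alphaA {n : ℕ} (A : Matrix (Fin n) (Fin n) ℝ) : ℝ :=
  max 1 (⨆ j ∈ Finset.Icc 1 n, sigmaMax (A ^ j))

def rhoHat {n m : ℕ} (A : Matrix (Fin n) (Fin n) ℝ) (B : Matrix (Fin n) (Fin m) ℝ)
    (lam rx ru : ℝ) : ℝ :=
  lam ^ (n - 1) / alphaA A *
    min (rx / (1 + sigmaMax (ctrb A B) / sigmaMin (ctrb A B)))
        (ru * sigmaMin (ctrb A B))

end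

namespace St15
open Matrix

lemma mulVec_add' {a b : ℕ} (M : Matrix (Fin a) (Fin b) ℝ) (x y : Euc b) :
    M.mulVec (x + y : Euc b) = M.mulVec x + M.mulVec y := Matrix.mulVec_add M x y

lemma mulVec_smul' {a b : ℕ} (M : Matrix (Fin a) (Fin b) ℝ) (c : ℝ) (x : Euc b) :
    M.mulVec (c • x : Euc b) = c • M.mulVec x := Matrix.mulVec_smul M c x

variable {n m : ℕ} {A : Matrix (Fin n) (Fin n) ℝ} {B : Matrix (Fin n) (Fin m) ℝ}
  {X : Set (Euc n)} {U : Set (Euc m)} {l : ℝ}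

lemma smul_mem_of_mem {S : Set (Euc n)} (hS : Convex ℝ S) (h0 : (0:Euc n) ∈ S)
    {t : ℝ} (ht0 : 0 ≤ t) (ht1 : t ≤ 1) {x : Euc n} (hx : x ∈ S) : t • x ∈ S := by
  have := hS hx h0 ht0 (by linarith : (0:ℝ) ≤ 1 - t) (by ring)
  simpa using this

lemma smul_set_mono_factor {S : Set (Euc n)} (hS : Convex ℝ S) (h0 : (0:Euc n) ∈ S)
    {a b : ℝ} (ha : 0 ≤ a) (hab : a ≤ b) : a • S ⊆ b • S := by
  rcases eq_or_lt_of_le (ha.trans hab) with hb | hb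
  · have ha0 : a = 0 := le_antisymm (hab.trans hb.symm.le) ha
    rw [ha0, ← hb]
  · rintro _ ⟨y, hy, rfl⟩
    refine ⟨(a/b) • y, smul_mem_of_mem hS h0 (div_nonneg ha hb.le) ((div_le_one hb).2 hab) hy, ?_⟩
    show b • ((a/b) • y) = a • y
    rw [smul_smul]; congr 1; field_simp

lemma Q1_mono {D D' : Set (Euc n)} (h : D ⊆ D') : Q1 A B X U l D ⊆ Q1 A B X U l D' := by
  rintro x ⟨hxX, u, hu, hin⟩
  exact ⟨hxX, u, hu, Set.smul_set_mono h hin⟩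

lemma Qiter_mono {D D' : Set (Euc n)} (h : D ⊆ D') (k : ℕ) :
    Qiter A B X U l D k ⊆ Qiter A B X U l D' k := by
  induction k with
  | zero => exact h
  | succ k ih => exact Q1_mono ih

lemma Qiter_add (D : Set (Euc n)) (a b : ℕ) :
    Qiter A B X U l D (a + b) = Qiter A B X U l (Qiter A B X U l D b) a := by
  induction a with
  | zero => simp [Qiter]
  | succ a ih => rw [Nat.succ_add]; show Q1 A B X U l _ = Q1 A B X U l _; rw [ih]

lemma Qiter_subset_X {D : Set (Euc n)} (hD : D ⊆ X) (k : ℕ) : Qiter A B X U l D k ⊆ X := by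
  cases k with
  | zero => exact hD
  | succ k => exact fun x hx => hx.1

lemma Q1_convex (hX : Convex ℝ X) (hU : Convex ℝ U) {D : Set (Euc n)} (hD : Convex ℝ D) :
    Convex ℝ (Q1 A B X U l D) := by
  rintro x₁ ⟨h1X, u₁, hu₁, h1⟩ x₂ ⟨h2X, u₂, hu₂, h2⟩ a b ha hb hab
  refine ⟨hX h1X h2X ha hb hab, a • u₁ + b • u₂, hU hu₁ hu₂ ha hb hab, ?_⟩
  have key : (WithLp.toLp 2 (A.mulVec (a • x₁ + b • x₂ : Euc n) + B.mulVec (a • u₁ + b • u₂ : Euc m)) : Euc n)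
      = a • WithLp.toLp 2 (A.mulVec x₁ + B.mulVec u₁) + b • WithLp.toLp 2 (A.mulVec x₂ + B.mulVec u₂) := by
    rw [mulVec_add', mulVec_add', mulVec_smul', mulVec_smul', mulVec_smul', mulVec_smul',
      ← WithLp.toLp_smul, ← WithLp.toLp_smul, ← WithLp.toLp_add, smul_add, smul_add]
    congr 1
    abel
  rw [key]
  exact (hD.smul l) h1 h2 ha hb hab

lemma Qiter_convex (hX : Convex ℝ X) (hU : Convex ℝ U) {D : Set (Euc n)} (hD : Convex ℝ D)
    (k : ℕ) : Convex ℝ (Qiter A B X U l D k) := by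
  induction k with
  | zero => exact hD
  | succ k ih => exact Q1_convex hX hU ih

lemma contractive_of_le {C : Set (Euc n)} (hC : IsContractive A B X U l C)
    (hconv : Convex ℝ C) (h0 : (0:Euc n) ∈ C) {l' : ℝ} (h0l : 0 ≤ l) (hll : l ≤ l') :
    IsContractive A B X U l' C := by
  refine ⟨hC.1, fun x hx => ?_⟩
  obtain ⟨u, hu, hin⟩ := hC.2 x hx
  exact ⟨u, hu, smul_set_mono_factor hconv h0 h0l hll hin⟩

lemma subset_Q1 {C : Set (Euc n)} (hC : IsContractive A B X U l C) : C ⊆ Q1 A B X U l C :=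
  fun x hx => ⟨hC.1 hx, hC.2 x hx⟩

lemma Q1_contractive {C : Set (Euc n)} (hC : IsContractive A B X U l C) :
    IsContractive A B X U l (Q1 A B X U l C) := by
  refine ⟨fun x hx => hx.1, ?_⟩
  rintro x ⟨hxX, u, hu, hin⟩
  exact ⟨u, hu, Set.smul_set_mono (subset_Q1 hC) hin⟩

lemma Qiter_contractive {C : Set (Euc n)} (hC : IsContractive A B X U l C) (k : ℕ) :
    IsContractive A B X U l (Qiter A B X U l C k) := by
  induction k with
  | zero => exact hC
  | succ k ih => exact Q1_contractive ih

lemma subset_Qiter {C : Set (Euc n)} (hC : IsContractive A B X U l C) (k : ℕ) :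
    C ⊆ Qiter A B X U l C k := by
  induction k with
  | zero => exact subset_rfl
  | succ k ih =>
      intro x hx
      obtain ⟨u, hu, hin⟩ := hC.2 x hx
      exact ⟨hC.1 hx, u, hu, Set.smul_set_mono ih hin⟩

lemma Qiter_subset_Cmax {C : Set (Euc n)} (hC : IsContractive A B X U l C) (k : ℕ) :
    Qiter A B X U l C k ⊆ Cmax A B X U l :=
  fun x hx => ⟨Qiter A B X U l C k, Qiter_contractive hC k, hx⟩

lemma mem_Qiter_iff {D : Set (Euc n)} {k : ℕ} {x : Euc n} :
    x ∈ Qiter A B X U l D k ↔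
      ∃ z : ℕ → Euc n, ∃ u : ℕ → Euc m, z 0 = x ∧
        (∀ i < k, z i ∈ X) ∧ (∀ i < k, u i ∈ U) ∧
        (∀ i < k, (l • z (i+1) : Euc n) = A.mulVec (z i) + B.mulVec (u i)) ∧ z k ∈ D := by
  induction k generalizing x with
  | zero =>
      constructor
      · intro hx
        exact ⟨fun _ => x, fun _ => 0, rfl, by omega, by omega, by omega, hx⟩
      · rintro ⟨z, u, rfl, _, _, _, hzk⟩
        exact hzk
  | succ k ih =>
      constructor
      · rintro ⟨hxX, u₀, hu₀, hin⟩
        obtain ⟨y, hy, hly⟩ := hin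
        obtain ⟨z, u, hz0, hzX, huU, hrec, hzk⟩ := ih.1 hy
        refine ⟨fun i => Nat.casesOn i x z, fun i => Nat.casesOn i u₀ u, rfl, ?_, ?_, ?_, hzk⟩
        · intro i hi
          cases i with
          | zero => exact hxX
          | succ i => exact hzX i (by omega)
        · intro i hi
          cases i with
          | zero => exact hu₀
          | succ i => exact huU i (by omega)
        · intro i hi
          cases i with
          | zero => show WithLp.ofLp (l • z 0 : Euc n) = _; rw [hz0]; exact congrArg WithLp.ofLp hly
          | succ i => exact hrec i (by omega)
      · rintro ⟨z, u, hz0, hzX, huU, hrec, hzk⟩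
        refine ⟨hz0 ▸ hzX 0 (by omega), u 0, huU 0 (by omega), ?_⟩
        have h1 : z 1 ∈ Qiter A B X U l D k :=
          ih.2 ⟨fun i => z (i+1), fun i => u (i+1), rfl,
            fun i hi => hzX (i+1) (by omega), fun i hi => huU (i+1) (by omega),
            fun i hi => hrec (i+1) (by omega), hzk⟩
        exact ⟨z 1, h1, by rw [← hz0]; exact (WithLp.ofLp_injective 2) (hrec 0 (by omega))⟩

lemma exists_correction (hAB : Controllable A B) :
    ∃ c : ℝ, 0 < c ∧ ∀ l : ℝ, 0 < l → l ≤ 1 → ∀ w : Euc n,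
      ∃ δu : ℕ → Euc m, ∃ s : ℕ → Euc n,
        s 0 = 0 ∧ s n = w ∧
        (∀ i < n, (l • s (i+1) : Euc n) = A.mulVec (s i) + B.mulVec (δu i)) ∧
        (∀ i < n, ‖δu i‖ ≤ c * ‖w‖) ∧ (∀ i ≤ n, ‖s i‖ ≤ c * ‖w‖) := by
  classical
  have hsurj : LinearMap.range (ctrb A B).mulVecLin = ⊤ := by
    apply Submodule.eq_top_of_finrank_eq
    have h1 : Module.finrank ℝ ↥(LinearMap.range (ctrb A B).mulVecLin) = n := hAB
    rw [h1, Module.finrank_fintype_fun_eq_card, Fintype.card_fin]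
  obtain ⟨ρ, hρ⟩ := (ctrb A B).mulVecLin.exists_rightInverse_of_surjective hsurj
  let Vp : ℕ → ((Fin n → ℝ) →ₗ[ℝ] (Fin m → ℝ)) := fun i =>
    if h : i < n then (LinearMap.funLeft ℝ ℝ (fun j : Fin m => ((⟨i, h⟩ : Fin n), j))) ∘ₗ ρ
    else 0
  let Lp : ℕ → ((Fin n → ℝ) →ₗ[ℝ] (Fin n → ℝ)) := fun j =>
    ∑ i ∈ Finset.range j, (A ^ (j - 1 - i) * B).mulVecLin ∘ₗ Vp i
  let V : ℕ → (Euc n →ₗ[ℝ] Euc m) := fun i => (WithLp.linearEquiv 2 ℝ (Fin m → ℝ)).symm.toLinearMap ∘ₗ Vp i ∘ₗ (WithLp.linearEquiv 2 ℝ (Fin n → ℝ)).toLinearMap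
  let L : ℕ → (Euc n →ₗ[ℝ] Euc n) := fun j => (WithLp.linearEquiv 2 ℝ (Fin n → ℝ)).symm.toLinearMap ∘ₗ Lp j ∘ₗ (WithLp.linearEquiv 2 ℝ (Fin n → ℝ)).toLinearMap
  set c0 : ℝ := 1 + (∑ j ∈ Finset.range (n+1), ‖LinearMap.toContinuousLinearMap (L j)‖)
      + (∑ i ∈ Finset.range n, ‖LinearMap.toContinuousLinearMap (V i)‖) with hc0
  have hsum1 : (0:ℝ) ≤ ∑ j ∈ Finset.range (n+1), ‖LinearMap.toContinuousLinearMap (L j)‖ :=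
    Finset.sum_nonneg fun _ _ => norm_nonneg _
  have hsum2 : (0:ℝ) ≤ ∑ i ∈ Finset.range n, ‖LinearMap.toContinuousLinearMap (V i)‖ :=
    Finset.sum_nonneg fun _ _ => norm_nonneg _
  have hc0pos : 0 < c0 := by rw [hc0]; linarith
  refine ⟨c0, hc0pos, ?_⟩
  intro l hl0 hl1 w
  refine ⟨fun i => l ^ (n - i) • V i w, fun j => l ^ (n - j) • L j w, ?_, ?_, ?_, ?_, ?_⟩
  · show l ^ (n - 0) • L 0 w = 0
    have h0 : L 0 w = 0 := by
      show WithLp.toLp 2 (Lp 0 (WithLp.ofLp w)) = 0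
      simp [Lp]
    rw [h0, smul_zero]
  · show l ^ (n - n) • L n w = w
    have hLn : L n w = w := by
      show WithLp.toLp 2 (Lp n (WithLp.ofLp w)) = w
      have h1 : Lp n w = ∑ i : Fin n, (A ^ (n - 1 - (i:ℕ)) * B).mulVec
            (fun j => ρ w (i, j)) := by
        simp only [Lp, LinearMap.coe_sum, Finset.sum_apply]
        rw [← Fin.sum_univ_eq_sum_range]
        apply Finset.sum_congr rfl
        intro i _
        simp only [Vp, dif_pos i.isLt, Fin.eta, LinearMap.coe_comp, Function.comp_apply,
          Matrix.mulVecLin_apply, LinearMap.funLeft_apply]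
        rfl
      have h2 : (∑ i : Fin n, (A ^ (n - 1 - (i:ℕ)) * B).mulVec
            (fun j => ρ w (i, j))) = (ctrb A B).mulVec (ρ w) := by
        funext idx
        simp only [Finset.sum_apply, Matrix.mulVec, dotProduct, ctrb, Matrix.of_apply,
          Fintype.sum_prod_type]
      have h3 : (ctrb A B).mulVec (ρ w) = w := by
        have := LinearMap.congr_fun hρ w
        simpa [Matrix.mulVecLin_apply] using this
      rw [h1, h2, h3]
    rw [Nat.sub_self, pow_zero, one_smul, hLn]
  · intro i hi
    show WithLp.ofLp (l • (l ^ (n - (i+1)) • L (i+1) w) : Euc n)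
        = A.mulVec (l ^ (n - i) • L i w : Euc n) + B.mulVec (l ^ (n - i) • V i w : Euc m)
    have hstep : WithLp.ofLp (L (i+1) w) = A.mulVec (L i w) + B.mulVec (V i w) := by
      show Lp (i+1) w = A.mulVec (Lp i w) + B.mulVec (Vp i w)
      have hexp : ∀ j : ℕ, Lp j w
          = ∑ t ∈ Finset.range j, (A ^ (j - 1 - t) * B).mulVec (Vp t w) := by
        intro j
        simp only [Lp, LinearMap.coe_sum, Finset.sum_apply, LinearMap.coe_comp,
          Function.comp_apply, Matrix.mulVecLin_apply]
      rw [hexp (i+1), hexp i, Finset.sum_range_succ]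
      have hBi : (A ^ (i + 1 - 1 - i) * B).mulVec (Vp i w) = B.mulVec (Vp i w) := by
        have he0 : i + 1 - 1 - i = 0 := by omega
        rw [he0, pow_zero, Matrix.one_mul]
      rw [hBi]
      congr 1
      rw [show (A.mulVec (∑ t ∈ Finset.range i, (A ^ (i - 1 - t) * B).mulVec (Vp t w)))
          = ∑ t ∈ Finset.range i, A.mulVec ((A ^ (i - 1 - t) * B).mulVec (Vp t w)) from
        map_sum A.mulVecLin _ _]
      apply Finset.sum_congr rfl
      intro t ht
      rw [Matrix.mulVec_mulVec, ← Matrix.mul_assoc]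
      have he : i + 1 - 1 - t = (i - 1 - t) + 1 := by
        have := Finset.mem_range.1 ht; omega
      rw [he, pow_succ']
    rw [WithLp.ofLp_smul, WithLp.ofLp_smul, hstep, mulVec_smul', mulVec_smul', ← smul_add, smul_smul]
    congr 1
    have he : n - i = (n - (i+1)) + 1 := by omega
    rw [he, pow_succ]
    ring
  · intro i hi
    show ‖(l ^ (n - i) • V i w : Euc m)‖ ≤ c0 * ‖w‖
    have h1 : ‖(l ^ (n - i) • V i w : Euc m)‖ = l ^ (n - i) * ‖V i w‖ := by
      rw [norm_smul, Real.norm_eq_abs, abs_of_pos (pow_pos hl0 _)]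
    rw [h1]
    have h2 : ‖V i w‖ ≤ ‖LinearMap.toContinuousLinearMap (V i)‖ * ‖w‖ :=
      (LinearMap.toContinuousLinearMap (V i)).le_opNorm w
    have h3 : ‖LinearMap.toContinuousLinearMap (V i)‖ ≤ c0 := by
      rw [hc0]
      have := Finset.single_le_sum (f := fun i => ‖LinearMap.toContinuousLinearMap (V i)‖)
        (fun _ _ => norm_nonneg _) (Finset.mem_range.2 hi)
      linarith
    have h4 : l ^ (n - i) ≤ 1 := pow_le_one₀ hl0.le hl1
    calc l ^ (n - i) * ‖V i w‖ ≤ 1 * ‖V i w‖ :=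
          mul_le_mul_of_nonneg_right h4 (norm_nonneg _)
      _ = ‖V i w‖ := one_mul _
      _ ≤ ‖LinearMap.toContinuousLinearMap (V i)‖ * ‖w‖ := h2
      _ ≤ c0 * ‖w‖ := mul_le_mul_of_nonneg_right h3 (norm_nonneg _)
  · intro j hj
    show ‖(l ^ (n - j) • L j w : Euc n)‖ ≤ c0 * ‖w‖
    have h1 : ‖(l ^ (n - j) • L j w : Euc n)‖ = l ^ (n - j) * ‖L j w‖ := by
      rw [norm_smul, Real.norm_eq_abs, abs_of_pos (pow_pos hl0 _)]
    rw [h1]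
    have h2 : ‖L j w‖ ≤ ‖LinearMap.toContinuousLinearMap (L j)‖ * ‖w‖ :=
      (LinearMap.toContinuousLinearMap (L j)).le_opNorm w
    have h3 : ‖LinearMap.toContinuousLinearMap (L j)‖ ≤ c0 := by
      rw [hc0]
      have := Finset.single_le_sum (f := fun j => ‖LinearMap.toContinuousLinearMap (L j)‖)
        (fun _ _ => norm_nonneg _) (Finset.mem_range.2 (by omega : j < n + 1))
      linarith
    have h4 : l ^ (n - j) ≤ 1 := pow_le_one₀ hl0.le hl1
    calc l ^ (n - j) * ‖L j w‖ ≤ 1 * ‖L j w‖ :=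
          mul_le_mul_of_nonneg_right h4 (norm_nonneg _)
      _ = ‖L j w‖ := one_mul _
      _ ≤ ‖LinearMap.toContinuousLinearMap (L j)‖ * ‖w‖ := h2
      _ ≤ c0 * ‖w‖ := mul_le_mul_of_nonneg_right h3 (norm_nonneg _)

lemma engine (hXconv : Convex ℝ X) (hUconv : Convex ℝ U)
    {r rU R : ℝ}
    (hrX : closedBall (0:Euc n) r ⊆ X) (hrUU : closedBall (0:Euc m) rU ⊆ U)
    (hXR : X ⊆ closedBall (0:Euc n) R)
    {c : ℝ} (hc : 0 < c)
    (hcorr : ∀ l : ℝ, 0 < l → l ≤ 1 → ∀ w : Euc n,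
      ∃ δu : ℕ → Euc m, ∃ s : ℕ → Euc n,
        s 0 = 0 ∧ s n = w ∧
        (∀ i < n, (l • s (i+1) : Euc n) = A.mulVec (s i) + B.mulVec (δu i)) ∧
        (∀ i < n, ‖δu i‖ ≤ c * ‖w‖) ∧ (∀ i ≤ n, ‖s i‖ ≤ c * ‖w‖))
    {q : ℝ} (hq0 : 0 < q) (hq1 : q < 1)
    (hqr : c * R * (1 - q) ≤ q * r) (hqrU : c * R * (1 - q) ≤ q * rU)
    (hl0 : 0 < l) (hl1 : l ≤ 1)
    {D : Set (Euc n)} (hDX : D ⊆ X)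
    {d : ℝ} (hd : 0 < d) :
    Qiter A B X U l ((1+d) • D) n ⊆ (1 + q*d) • Qiter A B X U l D n := by
  intro x hx
  rw [mem_Qiter_iff] at hx
  obtain ⟨z, u, hz0, hzX, huU, hrec, hzn⟩ := hx
  obtain ⟨y, hyD, hyz⟩ := hzn
  set t : ℝ := (1 + q * d)⁻¹ with ht
  have hqd0 : 0 < 1 + q * d := by positivity
  have ht0 : 0 < t := inv_pos.2 hqd0
  have htmul : t * (1 + q * d) = 1 := inv_mul_cancel₀ (ne_of_gt hqd0)
  have ht1 : t ≤ 1 := by nlinarith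
  have h1t : 1 - t = q * d * t := by linear_combination -htmul
  have h1tpos : 0 < 1 - t := by rw [h1t]; positivity
  set w : Euc n := y - t • z n with hw
  have hyR : ‖y‖ ≤ R := by
    have := hXR (hDX hyD)
    simpa [mem_closedBall, dist_zero_right] using this
  have hwy : w = (1 - t * (1 + d)) • y := by
    rw [hw, ← hyz, smul_smul, sub_smul, one_smul]
  have habs : |1 - t * (1 + d)| = d * (1 - q) * t := by
    have hts : 1 - t * (1 + d) = -(d * (1 - q) * t) := by linear_combination -htmul
    rw [hts, abs_neg, abs_of_nonneg]
    have h1q : (0:ℝ) ≤ 1 - q := by linarith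
    positivity
  have hwnorm : ‖w‖ ≤ d * (1 - q) * t * R := by
    rw [hwy, norm_smul, Real.norm_eq_abs, habs]
    have h1q : (0:ℝ) ≤ 1 - q := by linarith
    have hnn : (0:ℝ) ≤ d * (1 - q) * t := by positivity
    exact mul_le_mul_of_nonneg_left hyR hnn
  have hkey : ∀ ρ₀ : ℝ, c * R * (1 - q) ≤ q * ρ₀ → c * ‖w‖ ≤ (1 - t) * ρ₀ := by
    intro ρ₀ hρ
    have h2 : c * ‖w‖ ≤ c * (d * (1 - q) * t * R) :=
      mul_le_mul_of_nonneg_left hwnorm hc.le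
    have h4 : c * (d * (1 - q) * t * R) = c * R * (1 - q) * (d * t) := by ring
    have h5 : (1 - t) * ρ₀ = q * ρ₀ * (d * t) := by rw [h1t]; ring
    rw [h5]; rw [h4] at h2
    exact h2.trans (mul_le_mul_of_nonneg_right hρ (by positivity))
  obtain ⟨δu, s, hs0, hsn, hsrec, hδub, hsb⟩ := hcorr l hl0 hl1 w
  refine ⟨t • x, ?_, ?_⟩
  swap
  · show (1 + q * d) • t • x = x
    rw [smul_smul, mul_inv_cancel₀ (ne_of_gt hqd0), one_smul]
  rw [mem_Qiter_iff]
  refine ⟨fun i => t • z i + s i, fun i => t • u i + δu i, ?_, ?_, ?_, ?_, ?_⟩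
  · show t • z 0 + s 0 = t • x
    rw [hs0, add_zero, hz0]
  · intro i hi
    show t • z i + s i ∈ X
    have hsi : ‖s i‖ ≤ (1 - t) * r := (hsb i hi.le).trans (hkey r hqr)
    have hsmall : ‖(1 - t)⁻¹ • s i‖ ≤ r := by
      rw [norm_smul, Real.norm_eq_abs, abs_of_pos (inv_pos.2 h1tpos),
        inv_mul_le_iff₀ h1tpos]
      linarith [hsi]
    have hmem : ((1 - t)⁻¹ • s i) ∈ X := hrX (by
      simpa [mem_closedBall, dist_zero_right] using hsmall)
    have hcvx := hXconv (hzX i hi) hmem ht0.le h1tpos.le (by ring)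
    rw [smul_inv_smul₀ (ne_of_gt h1tpos)] at hcvx
    exact hcvx
  · intro i hi
    show t • u i + δu i ∈ U
    have hδi : ‖δu i‖ ≤ (1 - t) * rU := (hδub i hi).trans (hkey rU hqrU)
    have hsmall : ‖(1 - t)⁻¹ • δu i‖ ≤ rU := by
      rw [norm_smul, Real.norm_eq_abs, abs_of_pos (inv_pos.2 h1tpos),
        inv_mul_le_iff₀ h1tpos]
      linarith [hδi]
    have hmem : ((1 - t)⁻¹ • δu i) ∈ U := hrUU (by
      simpa [mem_closedBall, dist_zero_right] using hsmall)
    have hcvx := hUconv (huU i hi) hmem ht0.le h1tpos.le (by ring)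
    rw [smul_inv_smul₀ (ne_of_gt h1tpos)] at hcvx
    exact hcvx
  · intro i hi
    show WithLp.ofLp (l • (t • z (i+1) + s (i+1)) : Euc n)
        = A.mulVec (t • z i + s i : Euc n) + B.mulVec (t • u i + δu i : Euc m)
    rw [smul_add, smul_comm l t, WithLp.ofLp_add, hsrec i hi, WithLp.ofLp_smul, hrec i hi,
      mulVec_add', mulVec_add', mulVec_smul', mulVec_smul', smul_add]
    abel
  · show t • z n + s n ∈ D
    rw [hsn, hw]
    have heq : t • z n + (y - t • z n) = y := by abel
    rw [heq]
    exact hyD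

end St15

open St15 in
theorem stmt15 {n m : ℕ} (μ lamStar : ℝ)
    (hμ : μ ∈ Set.Ioo (0 : ℝ) 1) (hlamStar : lamStar ∈ Set.Ioo (0 : ℝ) 1)
    (A : Matrix (Fin n) (Fin n) ℝ) (B : Matrix (Fin n) (Fin m) ℝ)
    (hAB : Controllable A B)
    (X : Set (Euc n)) (U : Set (Euc m)) (hX : IsCSet X) (hU : IsCSet U)
    (C : Set (Euc n)) (hC : IsCSet C) (hCcontr : IsContractive A B X U lamStar C) :
    ∃ lam ∈ Set.Ico lamStar 1, ∃ k : ℕ,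
      Qiter A B X U lam X k ⊆ (1 + (1 - μ) / (2 * μ)) • Qiter A B X U lam C k ∧
      (1 + (1 - μ) / (2 * μ)) • Qiter A B X U lam C k
        ⊆ (1 + (1 - μ) / (2 * μ)) • Cmax A B X U lam ∧
      1 + μ ≤ 2 * lam ^ k := by
  obtain ⟨hμ0, hμ1⟩ := hμ
  obtain ⟨hls0, hls1⟩ := hlamStar
  have hεpos : 0 < (1 - μ) / (2 * μ) := div_pos (by linarith) (by linarith)
  have h0C : (0:Euc n) ∈ C := interior_subset hC.2.2
  rcases Nat.eq_zero_or_pos n with hn0 | hn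
  · -- degenerate case n = 0
    subst hn0
    refine ⟨lamStar, ⟨le_refl _, hls1⟩, 0, ?_, ?_, ?_⟩
    · intro x hx
      have hx0 : x = 0 := WithLp.ofLp_injective 2 (funext fun i => i.elim0)
      exact ⟨0, h0C, by show (1 + (1 - μ) / (2 * μ)) • (0:Euc 0) = x; rw [smul_zero, hx0]⟩
    · exact Set.smul_set_mono (fun x hx => ⟨C, hCcontr, hx⟩)
    · rw [pow_zero]; linarith
  · -- main case
    -- inradius of C (hence of X)
    obtain ⟨r₁, hr₁pos, hball₁⟩ := Metric.mem_nhds_iff.1 (mem_interior_iff_mem_nhds.1 hC.2.2)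
    set r : ℝ := r₁ / 2 with hrdef
    have hrpos : 0 < r := by positivity
    have hrC : closedBall (0:Euc n) r ⊆ C :=
      (closedBall_subset_ball (by linarith)).trans hball₁
    have hrX : closedBall (0:Euc n) r ⊆ X := hrC.trans hCcontr.1
    -- inradius of U
    obtain ⟨rU₁, hrU₁pos, hballU₁⟩ := Metric.mem_nhds_iff.1 (mem_interior_iff_mem_nhds.1 hU.2.2)
    set rU : ℝ := rU₁ / 2 with hrUdef
    have hrUpos : 0 < rU := by positivity
    have hrUU : closedBall (0:Euc m) rU ⊆ U :=
      (closedBall_subset_ball (by linarith)).trans hballU₁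
    -- circumradius of X
    obtain ⟨R₀, hR₀⟩ := (hX.2.1.isBounded).subset_closedBall (0:Euc n)
    set R : ℝ := max R₀ r with hRdef
    have hXR : X ⊆ closedBall (0:Euc n) R :=
      hR₀.trans (closedBall_subset_closedBall (le_max_left _ _))
    have hRpos : 0 < R := lt_of_lt_of_le hrpos (le_max_right _ _)
    -- correction constant
    obtain ⟨c, hc, hcorr⟩ := exists_correction hAB
    -- contraction ratio q
    set m0 : ℝ := min r rU with hm0def
    have hm0pos : 0 < m0 := lt_min hrpos hrUpos
    have hcRpos : 0 < c * R := mul_pos hc hRpos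
    set q : ℝ := c * R / (c * R + m0) with hqdef
    have hq0 : 0 < q := div_pos hcRpos (by linarith)
    have hq1 : q < 1 := (div_lt_one (by linarith)).2 (by linarith)
    have hqeq : c * R * (1 - q) = q * m0 := by
      rw [hqdef]
      field_simp
      ring
    have hqr : c * R * (1 - q) ≤ q * r := by
      rw [hqeq]
      exact mul_le_mul_of_nonneg_left (min_le_left _ _) hq0.le
    have hqrU : c * R * (1 - q) ≤ q * rU := by
      rw [hqeq]
      exact mul_le_mul_of_nonneg_left (min_le_right _ _) hq0.le
    -- initial gap
    set d₀ : ℝ := R / r with hd₀def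
    have hd₀pos : 0 < d₀ := div_pos hRpos hrpos
    -- choose number of blocks
    obtain ⟨j₀, hj₀⟩ := exists_pow_lt_of_lt_one (div_pos hεpos hd₀pos) hq1
    set j : ℕ := j₀ + 1 with hjdef
    have hjle : q ^ j * d₀ ≤ (1 - μ) / (2 * μ) := by
      have h1 : q ^ j ≤ q ^ j₀ := pow_le_pow_of_le_one hq0.le hq1.le (by omega)
      have h2 : q ^ j₀ * d₀ < (1 - μ) / (2 * μ) := by
        rw [← lt_div_iff₀ hd₀pos]
        exact hj₀
      nlinarith [hd₀pos]
    set k : ℕ := j * n with hkdef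
    have hkpos : 0 < k := Nat.mul_pos (by omega) hn
    -- choose lam
    set x0 : ℝ := (1 + μ) / 2 with hx0def
    have hx00 : 0 < x0 := by rw [hx0def]; linarith
    have hx01 : x0 < 1 := by rw [hx0def]; linarith
    have hkR : (0:ℝ) < (k:ℝ)⁻¹ := by
      have : (0:ℝ) < (k:ℝ) := by exact_mod_cast hkpos
      positivity
    set l0 : ℝ := x0 ^ ((k:ℝ)⁻¹) with hl0def
    have hl00 : 0 < l0 := Real.rpow_pos_of_pos hx00 _
    have hl01 : l0 < 1 := Real.rpow_lt_one hx00.le hx01 hkR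
    set l : ℝ := max lamStar l0 with hldef
    have hlge : lamStar ≤ l := le_max_left _ _
    have hllt : l < 1 := max_lt hls1 hl01
    have hl0 : 0 < l := lt_of_lt_of_le hls0 hlge
    have hl1 : l ≤ 1 := hllt.le
    -- lam ^ k bound
    have hl0k : l0 ^ k = x0 := by
      rw [hl0def, ← Real.rpow_natCast (x0 ^ ((k:ℝ)⁻¹)) k, ← Real.rpow_mul hx00.le]
      rw [inv_mul_cancel₀ (by exact_mod_cast hkpos.ne' : (k:ℝ) ≠ 0), Real.rpow_one]
    have hlk : x0 ≤ l ^ k := by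
      rw [← hl0k]
      exact pow_le_pow_left₀ hl00.le (le_max_right _ _) k
    -- C is l-contractive
    have hCl : IsContractive A B X U l C :=
      contractive_of_le hCcontr hC.1 h0C hls0.le hlge
    -- base inclusion
    have hbase : X ⊆ (1 + d₀) • C := by
      intro x hx
      have hxR : ‖x‖ ≤ R := by
        have := hXR hx
        simpa [mem_closedBall, dist_zero_right] using this
      have hfac : 0 < 1 + d₀ := by linarith
      refine ⟨(1 + d₀)⁻¹ • x, ?_, ?_⟩
      · apply hrC
        rw [mem_closedBall, dist_zero_right, norm_smul, Real.norm_eq_abs,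
          abs_of_pos (inv_pos.2 hfac), inv_mul_le_iff₀ hfac]
        have : (1 + d₀) * r = r + R := by
          rw [hd₀def]
          field_simp
        rw [this]
        linarith
      · show (1 + d₀) • (1 + d₀)⁻¹ • x = x
        rw [smul_smul, mul_inv_cancel₀ (ne_of_gt hfac), one_smul]
    -- iteration
    have hiter : ∀ i : ℕ, Qiter A B X U l X (i*n) ⊆ (1 + q^i * d₀) • Qiter A B X U l C (i*n) := by
      intro i
      induction i with
      | zero => simpa [Qiter] using hbase
      | succ i ih =>
          have hmul : (i+1)*n = n + i*n := by ring
          rw [hmul, Qiter_add X n (i*n), Qiter_add C n (i*n)]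
          calc Qiter A B X U l (Qiter A B X U l X (i*n)) n
              ⊆ Qiter A B X U l ((1 + q^i * d₀) • Qiter A B X U l C (i*n)) n :=
                Qiter_mono ih n
            _ ⊆ (1 + q * (q^i * d₀)) • Qiter A B X U l (Qiter A B X U l C (i*n)) n := by
                have hd' : 0 < q^i * d₀ := by positivity
                exact engine hX.1 hU.1 hrX hrUU hXR hc hcorr hq0 hq1 hqr hqrU hl0 hl1
                  (Qiter_subset_X hCcontr.1 (i*n)) hd'
            _ = (1 + q^(i+1) * d₀) • Qiter A B X U l (Qiter A B X U l C (i*n)) n := by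
                rw [show q * (q^i * d₀) = q^(i+1) * d₀ by rw [pow_succ]; ring]
    refine ⟨l, ⟨hlge, hllt⟩, k, ?_, ?_, ?_⟩
    · -- first inclusion
      have h1 := hiter j
      have hconvS : Convex ℝ (Qiter A B X U l C k) :=
        Qiter_convex hX.1 hU.1 hC.1 k
      have h0S : (0:Euc n) ∈ Qiter A B X U l C k := subset_Qiter hCl k h0C
      intro x hx
      have hx1 : x ∈ (1 + q^j * d₀) • Qiter A B X U l C k := h1 hx
      exact smul_set_mono_factor hconvS h0S (by positivity) (by linarith [hjle]) hx1
    · exact Set.smul_set_mono (Qiter_subset_Cmax hCl k)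
    · have : (1 + μ) / 2 ≤ l ^ k := hlk
      linarith
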